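/- Let C ⊆ ℝ^p be a nonempty closed convex cone and z ∈ ℝ^p. Then the Euclidean projection Π_C(z) satisfies ‖Π_C(z)‖₂ ≤ sup_{v ∈ C, ‖v‖₂ ≤ 1} ⟨v, z⟩. -/

import Mathlib

/-- Norm of the projection onto a closed convex cone is bounded by the support
value `sup_{v ∈ C, ‖v‖ ≤ 1} ⟨v, z⟩` (Lemma 6.2 of Oymak et al.). -/
theorem stmt_15 {p : ℕ} (C : Set (EuclideanSpace ℝ (Fin p)))
    (hC : IsClosed C) (hconv : Convex ℝ C)
    (hcone : ∀ c : ℝ, 0 ≤ c → ∀ x ∈ C, c • x ∈ C) (hne : C.Nonempty)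
    (z w : EuclideanSpace ℝ (Fin p)) (hw : w ∈ C)
    (hproj : ∀ c ∈ C, ‖w - z‖ ≤ ‖c - z‖) :
    ‖w‖ ≤ sSup {r | ∃ v ∈ C, ‖v‖ ≤ 1 ∧ r = (inner ℝ v z : ℝ)} := by
  have h0 : (0 : EuclideanSpace ℝ (Fin p)) ∈ C := by
    obtain ⟨x, hx⟩ := hne
    simpa using hcone 0 le_rfl x hx
  have hbdd : BddAbove {r | ∃ v ∈ C, ‖v‖ ≤ 1 ∧ r = (inner ℝ v z : ℝ)} := by
    refine ⟨‖z‖, ?_⟩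
    rintro r ⟨v, hv, hv1, rfl⟩
    calc (inner ℝ v z : ℝ) ≤ ‖v‖ * ‖z‖ := real_inner_le_norm v z
      _ ≤ 1 * ‖z‖ := by
        exact mul_le_mul_of_nonneg_right hv1 (norm_nonneg z)
      _ = ‖z‖ := one_mul _
  -- variational inequality
  have hinf : ‖z - w‖ = ⨅ v : C, ‖z - v‖ := by
    haveI : Nonempty C := ⟨⟨w, hw⟩⟩
    apply le_antisymm
    · exact le_ciInf fun ⟨c, hc⟩ => by
        rw [norm_sub_rev z w, norm_sub_rev z c]; exact hproj c hc
    · have hbb : BddBelow (Set.range fun v : C => ‖z - v‖) := by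
        refine ⟨0, ?_⟩
        rintro r ⟨v, rfl⟩
        exact norm_nonneg _
      exact ciInf_le hbb ⟨w, hw⟩
  have hvar : ∀ c ∈ C, inner ℝ (z - w) (c - w) ≤ (0 : ℝ) :=
    (norm_eq_iInf_iff_real_inner_le_zero hconv hw).mp hinf
  have h1 : inner ℝ (z - w) (0 - w) ≤ (0 : ℝ) := hvar 0 h0
  have h2 : inner ℝ (z - w) ((2 : ℝ) • w - w) ≤ (0 : ℝ) :=
    hvar ((2 : ℝ) • w) (hcone 2 (by norm_num) w hw)
  have hzw : inner ℝ (z - w) w = (0 : ℝ) := by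
    have h1' : (0 : ℝ) ≤ inner ℝ (z - w) w := by
      rw [zero_sub, inner_neg_right] at h1; linarith
    have h2' : inner ℝ (z - w) w ≤ (0 : ℝ) := by
      have : ((2 : ℝ) • w - w) = w := by
        rw [two_smul]; abel
      rwa [this] at h2
    linarith
  have hwz : (inner ℝ w z : ℝ) = ‖w‖ ^ 2 := by
    rw [inner_sub_left] at hzw
    rw [real_inner_comm, ← real_inner_self_eq_norm_sq]
    linarith
  rcases eq_or_ne w 0 with rfl | hwne
  · rw [norm_zero]
    exact le_csSup hbdd ⟨0, h0, by simp⟩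
  · have hn : (0 : ℝ) < ‖w‖ := norm_pos_iff.mpr hwne
    have hmem : ‖w‖ ∈ {r | ∃ v ∈ C, ‖v‖ ≤ 1 ∧ r = (inner ℝ v z : ℝ)} := by
      refine ⟨‖w‖⁻¹ • w, hcone _ (inv_nonneg.mpr hn.le) w hw, ?_, ?_⟩
      · rw [norm_smul, norm_inv, norm_norm, inv_mul_cancel₀ hn.ne']
      · rw [real_inner_smul_left, hwz]
        field_simp [sq]
    exact le_csSup hbdd hmem
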